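/- (Pexider Cauchy stability with general control) If f, g, h : E → F satisfy ‖f(x+y) − g(x) − h(y)‖_β ≤ φ(x,y) for all x, y ∈ E, where φ(2x, 2y) ≤ 2^β·L·φ(x,y) for some L < 1, then there exists a unique additive a : E → F such that ‖f(x) − a(x) − g(0) − h(0)‖_β ≤ (2/2^β)·(1/(1−L))·χ(x,x) + (1/2^β)·(1/(1−L))·ψ(x,x), ‖g(x) − a(x) − g(0)‖_β ≤ φ(x,0) + (2/2^β)·(1/(1−L))·χ(x,x) + (1/2^β)·(1/(1−L))·ψ(x,x), and ‖h(x) − a(x) − h(0)‖_β ≤ (1/2^β)·(1/(1−L))·ψ(x,x) + φ(0,x), where χ(x,y) = 2φ(0,y) + 2φ(x,y) + 2φ(x,0) and ψ(x,y) = φ(0,y) + φ(x,y) + φ(x,0). -/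

import Mathlib

set_option maxHeartbeats 4000000 in
theorem stmt_18
    {E : Type*} [AddCommGroup E] [Module ℝ E]
    {F : Type*} [AddCommGroup F] [Module ℝ F]
    {β : ℝ} (hβ0 : 0 < β) (hβ1 : β ≤ 1)
    (Nb : F → ℝ)
    (hNnn : ∀ z : F, 0 ≤ Nb z)
    (hN0 : ∀ z : F, Nb z = 0 ↔ z = 0)
    (hNs : ∀ (r : ℝ) (z : F), Nb (r • z) = |r| ^ β * Nb z)
    (hNt : ∀ z w : F, Nb (z + w) ≤ Nb z + Nb w)
    (hcomp : ∀ u : ℕ → F,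
      (∀ ε : ℝ, 0 < ε → ∃ N, ∀ m ≥ N, ∀ n ≥ N, Nb (u m - u n) < ε) →
      ∃ l : F, ∀ ε : ℝ, 0 < ε → ∃ N, ∀ n ≥ N, Nb (u n - l) < ε)
    (φ : E → E → ℝ) (hφnn : ∀ x y, 0 ≤ φ x y)
    (L : ℝ) (hL0 : 0 ≤ L) (hL1 : L < 1)
    (hφcontr : ∀ x y : E, φ ((2 : ℝ) • x) ((2 : ℝ) • y) ≤ (2 : ℝ) ^ β * L * φ x y)
    (f g h : E → F)
    (hfgh : ∀ x y : E, Nb (f (x + y) - g x - h y) ≤ φ x y)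
    (χ ψ : E → E → ℝ)
    (hχ : ∀ x y : E, χ x y = 2 * φ 0 y + 2 * φ x y + 2 * φ x 0)
    (hψ : ∀ x y : E, ψ x y = φ 0 y + φ x y + φ x 0) :
    ∃! a : E → F,
      (∀ x y : E, a (x + y) = a x + a y) ∧
      (∀ x : E, Nb (f x - a x - g 0 - h 0)
        ≤ 2 / 2 ^ β * (1 / (1 - L)) * χ x x + 1 / 2 ^ β * (1 / (1 - L)) * ψ x x) ∧
      (∀ x : E, Nb (g x - a x - g 0)
        ≤ φ x 0 + 2 / 2 ^ β * (1 / (1 - L)) * χ x x + 1 / 2 ^ β * (1 / (1 - L)) * ψ x x) ∧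
      (∀ x : E, Nb (h x - a x - h 0)
        ≤ 1 / 2 ^ β * (1 / (1 - L)) * ψ x x + φ 0 x) := by
  have h2β : (0:ℝ) < (2:ℝ) ^ β := Real.rpow_pos_of_pos two_pos β
  have h1L : (0:ℝ) < 1 - L := by linarith
  have hNneg : ∀ z : F, Nb (-z) = Nb z := by
    intro z
    have := hNs (-1) z
    simpa using this
  have hNsub : ∀ z w : F, Nb (z - w) = Nb (w - z) := by
    intro z w; rw [← hNneg (z - w), neg_sub]
  have tri3 : ∀ p q r : F, Nb (p + q + r) ≤ Nb p + Nb q + Nb r := by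
    intro p q r
    calc Nb (p + q + r) ≤ Nb (p + q) + Nb r := hNt _ _
      _ ≤ Nb p + Nb q + Nb r := by linarith [hNt p q]
  have tri4 : ∀ p q r s : F, Nb (p + q + r + s) ≤ Nb p + Nb q + Nb r + Nb s := by
    intro p q r s
    calc Nb (p + q + r + s) ≤ Nb (p + q + r) + Nb s := hNt _ _
      _ ≤ Nb p + Nb q + Nb r + Nb s := by linarith [tri3 p q r]
  -- nonnegativity of ψ, χ
  have hψnn : ∀ x y : E, 0 ≤ ψ x y := by
    intro x y; rw [hψ]
    have := hφnn 0 y; have := hφnn x y; have := hφnn x 0; linarith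
  have hχnn : ∀ x y : E, 0 ≤ χ x y := by
    intro x y; rw [hχ]
    have := hφnn 0 y; have := hφnn x y; have := hφnn x 0; linarith
  -- one-step contraction for ψ and χ
  have hψc : ∀ x y : E, ψ ((2:ℝ) • x) ((2:ℝ) • y) ≤ (2:ℝ) ^ β * L * ψ x y := by
    intro x y
    have h1 := hφcontr 0 y
    have h2 := hφcontr x y
    have h3 := hφcontr x 0
    rw [smul_zero] at h1 h3
    rw [hψ, hψ]; nlinarith
  have hχc : ∀ x y : E, χ ((2:ℝ) • x) ((2:ℝ) • y) ≤ (2:ℝ) ^ β * L * χ x y := by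
    intro x y
    have h1 := hφcontr 0 y
    have h2 := hφcontr x y
    have h3 := hφcontr x 0
    rw [smul_zero] at h1 h3
    rw [hχ, hχ]; nlinarith
  -- iterated contraction
  have iter : ∀ θ : E → E → ℝ, (∀ x y, 0 ≤ θ x y) →
      (∀ x y : E, θ ((2:ℝ) • x) ((2:ℝ) • y) ≤ (2:ℝ) ^ β * L * θ x y) →
      ∀ (n : ℕ) (x y : E), θ ((2:ℝ)^n • x) ((2:ℝ)^n • y) ≤ ((2:ℝ)^β * L)^n * θ x y := by
    intro θ hnn hc n
    induction n with
    | zero => intro x y; simp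
    | succ n ih =>
      intro x y
      have e : ∀ z : E, (2:ℝ)^(n+1) • z = (2:ℝ) • ((2:ℝ)^n • z) := by
        intro z; rw [smul_smul, ← pow_succ']
      rw [e x, e y, pow_succ]
      calc θ ((2:ℝ) • ((2:ℝ)^n • x)) ((2:ℝ) • ((2:ℝ)^n • y))
          ≤ (2:ℝ)^β * L * θ ((2:ℝ)^n • x) ((2:ℝ)^n • y) := hc _ _
        _ ≤ (2:ℝ)^β * L * (((2:ℝ)^β * L)^n * θ x y) := by
            apply mul_le_mul_of_nonneg_left (ih x y) (by positivity)
        _ = ((2:ℝ)^β * L)^n * ((2:ℝ)^β * L) * θ x y := by ring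
  have hψiter := iter ψ hψnn hψc
  have hχiter := iter χ hχnn hχc
  -- the N of a scaled vector
  have hNpow : ∀ (n : ℕ) (z : F), Nb (((2:ℝ)^n)⁻¹ • z) = (((2:ℝ)^β)⁻¹)^n * Nb z := by
    intro n z
    have hbase : ((2:ℝ)^n : ℝ) ^ β = ((2:ℝ)^β)^n := by
      rw [← Real.rpow_natCast (2:ℝ) n, ← Real.rpow_mul (by norm_num : (0:ℝ) ≤ 2),
        mul_comm, Real.rpow_mul (by norm_num : (0:ℝ) ≤ 2), Real.rpow_natCast]
    rw [hNs]
    congr 1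
    rw [abs_of_pos (by positivity), Real.inv_rpow (by positivity), hbase, inv_pow]
  -- Cauchy difference bound for F1 = f - g 0 - h 0
  have hCD : ∀ x y : E,
      Nb ((f (x + y) - g 0 - h 0) - (f x - g 0 - h 0) - (f y - g 0 - h 0)) ≤ ψ x y := by
    intro x y
    have e : (f (x + y) - g 0 - h 0) - (f x - g 0 - h 0) - (f y - g 0 - h 0)
        = (f (x + y) - g x - h y) + (-(f x - g x - h 0)) + (-(f y - g 0 - h y)) := by abel
    rw [e, hψ]
    have h1 := hfgh x y
    have h2 := hfgh x 0; rw [add_zero] at h2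
    have h3 := hfgh 0 y; rw [zero_add] at h3
    calc Nb _ ≤ Nb (f (x + y) - g x - h y) + Nb (-(f x - g x - h 0)) + Nb (-(f y - g 0 - h y)) :=
        tri3 _ _ _
      _ ≤ φ x y + φ x 0 + φ 0 y := by rw [hNneg, hNneg]; linarith
      _ = φ 0 y + φ x y + φ x 0 := by ring
  -- doubling bound
  have hD1 : ∀ x : E,
      Nb ((f ((2:ℝ) • x) - g 0 - h 0) - (2:ℝ) • (f x - g 0 - h 0)) ≤ ψ x x := by
    intro x
    have := hCD x x
    rw [show x + x = (2:ℝ) • x from (two_smul ℝ x).symm] at this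
    have e' : (2:ℝ) • (f x - g 0 - h 0) = (f x - g 0 - h 0) + (f x - g 0 - h 0) :=
      two_smul ℝ _
    have e : (f ((2:ℝ) • x) - g 0 - h 0) - (2:ℝ) • (f x - g 0 - h 0)
        = (f ((2:ℝ) • x) - g 0 - h 0) - (f x - g 0 - h 0) - (f x - g 0 - h 0) := by
      rw [e']; abel
    rw [e]; exact this
  -- the approximating sequence
  set d : ℕ → E → F := fun n x => ((2:ℝ)^n)⁻¹ • (f ((2:ℝ)^n • x) - g 0 - h 0) with hd
  have hd0 : ∀ x : E, d 0 x = f x - g 0 - h 0 := by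
    intro x; rw [hd]; simp
  -- step bound
  have hstep : ∀ (n : ℕ) (x : E),
      Nb (d (n+1) x - d n x) ≤ ((2:ℝ)^β)⁻¹ * L^n * ψ x x := by
    intro n x
    have e1 : ((2:ℝ)^n)⁻¹ = ((2:ℝ)^(n+1))⁻¹ * 2 := by
      rw [pow_succ]
      field_simp
    have e2 : (2:ℝ)^(n+1) • x = (2:ℝ) • ((2:ℝ)^n • x) := by
      rw [smul_smul, ← pow_succ']
    have e3 : d (n+1) x - d n x
        = ((2:ℝ)^(n+1))⁻¹ • ((f ((2:ℝ) • ((2:ℝ)^n • x)) - g 0 - h 0)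
            - (2:ℝ) • (f ((2:ℝ)^n • x) - g 0 - h 0)) := by
      simp only [hd]
      rw [e2]
      module
    rw [e3, hNpow]
    calc (((2:ℝ)^β)⁻¹)^(n+1) * Nb ((f ((2:ℝ) • ((2:ℝ)^n • x)) - g 0 - h 0)
            - (2:ℝ) • (f ((2:ℝ)^n • x) - g 0 - h 0))
        ≤ (((2:ℝ)^β)⁻¹)^(n+1) * ψ ((2:ℝ)^n • x) ((2:ℝ)^n • x) := by
          apply mul_le_mul_of_nonneg_left (hD1 _) (by positivity)
      _ ≤ (((2:ℝ)^β)⁻¹)^(n+1) * (((2:ℝ)^β * L)^n * ψ x x) := by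
          apply mul_le_mul_of_nonneg_left (hψiter n x x) (by positivity)
      _ = ((2:ℝ)^β)⁻¹ * L^n * ψ x x := by
          rw [pow_succ, mul_pow]
          field_simp
          have hc : ((2:ℝ)^β)^n * (((2:ℝ)^β)⁻¹)^n = 1 := by
            rw [← mul_pow, mul_inv_cancel₀ h2β.ne', one_pow]
          linear_combination (L^n * ψ x x) * hc
  -- geometric sum bound
  have hgeo : ∀ m n : ℕ, ∑ k ∈ Finset.Ico m n, L^k ≤ L^m / (1 - L) := by
    intro m n
    rcases le_or_gt n m with hnm | hmn
    · rw [Finset.Ico_eq_empty (by omega)]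
      simp
      positivity
    · rw [Finset.sum_Ico_eq_sum_range]
      have : ∀ j ∈ Finset.range (n - m), L ^ (m + j) = L^m * L^j := by
        intro j _; rw [pow_add]
      rw [Finset.sum_congr rfl this, ← Finset.mul_sum]
      have hs : ∑ j ∈ Finset.range (n - m), L^j ≤ 1 / (1 - L) := by
        rw [geom_sum_eq (ne_of_lt hL1)]
        have e4 : (L^(n-m) - 1)/(L - 1) = (1 - L^(n-m))/(1 - L) := by
          rw [← neg_sub 1 (L^(n-m)), ← neg_sub 1 L, neg_div_neg_eq]
        rw [e4]
        exact (div_le_div_iff_of_pos_right h1L).mpr (by nlinarith [pow_nonneg hL0 (n-m)])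
      calc L^m * ∑ j ∈ Finset.range (n - m), L^j ≤ L^m * (1/(1-L)) := by
            apply mul_le_mul_of_nonneg_left hs (by positivity)
        _ = L^m / (1 - L) := by ring
  -- telescoping bound
  have htel : ∀ (x : E) (m n : ℕ), m ≤ n →
      Nb (d n x - d m x) ≤ ((2:ℝ)^β)⁻¹ * (L^m / (1 - L)) * ψ x x := by
    intro x m n hmn
    have key : Nb (d n x - d m x)
        ≤ ((2:ℝ)^β)⁻¹ * ψ x x * ∑ k ∈ Finset.Ico m n, L^k := by
      induction n, hmn using Nat.le_induction with
      | base => simp [sub_self, (hN0 0).mpr rfl]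
      | succ n hmn ih =>
        have e : d (n+1) x - d m x = (d (n+1) x - d n x) + (d n x - d m x) := by abel
        rw [e, Finset.sum_Ico_succ_top hmn]
        calc Nb _ ≤ Nb (d (n+1) x - d n x) + Nb (d n x - d m x) := hNt _ _
          _ ≤ ((2:ℝ)^β)⁻¹ * L^n * ψ x x + ((2:ℝ)^β)⁻¹ * ψ x x * ∑ k ∈ Finset.Ico m n, L^k := by
              linarith [hstep n x]
          _ = ((2:ℝ)^β)⁻¹ * ψ x x * ((∑ k ∈ Finset.Ico m n, L^k) + L^n) := by ring
    calc Nb (d n x - d m x) ≤ ((2:ℝ)^β)⁻¹ * ψ x x * ∑ k ∈ Finset.Ico m n, L^k := key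
      _ ≤ ((2:ℝ)^β)⁻¹ * ψ x x * (L^m / (1 - L)) := by
          apply mul_le_mul_of_nonneg_left (hgeo m n)
          have := hψnn x x; positivity
      _ = ((2:ℝ)^β)⁻¹ * (L^m / (1 - L)) * ψ x x := by ring
  -- smallness of L^n * c
  have hsmall : ∀ c ε : ℝ, 0 ≤ c → 0 < ε → ∃ n : ℕ, c * L^n < ε := by
    intro c ε hc hε
    obtain ⟨n, hn⟩ := exists_pow_lt_of_lt_one (show (0:ℝ) < ε / (c + 1) by positivity) hL1
    refine ⟨n, ?_⟩
    have h1 : c * L^n ≤ (c + 1) * L^n := by nlinarith [pow_nonneg hL0 n]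
    have h2 : (c + 1) * L^n < (c + 1) * (ε / (c + 1)) := by
      apply mul_lt_mul_of_pos_left hn (by linarith)
    have h3 : (c + 1) * (ε / (c + 1)) = ε := by field_simp
    linarith
  -- Cauchy property and limit
  have hlim : ∀ x : E, ∃ l : F, ∀ ε : ℝ, 0 < ε → ∃ N, ∀ n ≥ N, Nb (d n x - l) < ε := by
    intro x
    apply hcomp
    intro ε hε
    obtain ⟨N, hN⟩ := hsmall (((2:ℝ)^β)⁻¹ / (1 - L) * ψ x x) ε
      (by have := hψnn x x; positivity) hε
    refine ⟨N, fun m hm n hn => ?_⟩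
    rcases le_total n m with hle | hle
    · calc Nb (d m x - d n x) ≤ ((2:ℝ)^β)⁻¹ * (L^n / (1 - L)) * ψ x x := htel x n m hle
        _ = ((2:ℝ)^β)⁻¹ / (1 - L) * ψ x x * L^n := by ring
        _ ≤ ((2:ℝ)^β)⁻¹ / (1 - L) * ψ x x * L^N := by
            apply mul_le_mul_of_nonneg_left (pow_le_pow_of_le_one hL0 hL1.le hn)
            have := hψnn x x; positivity
        _ < ε := hN
    · rw [hNsub]
      calc Nb (d n x - d m x) ≤ ((2:ℝ)^β)⁻¹ * (L^m / (1 - L)) * ψ x x := htel x m n hle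
        _ = ((2:ℝ)^β)⁻¹ / (1 - L) * ψ x x * L^m := by ring
        _ ≤ ((2:ℝ)^β)⁻¹ / (1 - L) * ψ x x * L^N := by
            apply mul_le_mul_of_nonneg_left (pow_le_pow_of_le_one hL0 hL1.le hm)
            have := hψnn x x; positivity
        _ < ε := hN
  choose a ha using hlim
  -- distance from a to F1
  have hdist : ∀ x : E,
      Nb (a x - (f x - g 0 - h 0)) ≤ ((2:ℝ)^β)⁻¹ / (1 - L) * ψ x x := by
    intro x
    apply le_of_forall_pos_le_add
    intro ε hε
    obtain ⟨N, hN⟩ := ha x ε hε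
    have h1 : Nb (d N x - a x) < ε := hN N le_rfl
    have h2 : Nb (d N x - d 0 x) ≤ ((2:ℝ)^β)⁻¹ * (L^0 / (1 - L)) * ψ x x :=
      htel x 0 N (Nat.zero_le N)
    rw [hd0] at h2
    have e : a x - (f x - g 0 - h 0)
        = (a x - d N x) + (d N x - (f x - g 0 - h 0)) := by abel
    calc Nb (a x - (f x - g 0 - h 0))
        ≤ Nb (a x - d N x) + Nb (d N x - (f x - g 0 - h 0)) := by rw [e]; exact hNt _ _
      _ = Nb (d N x - a x) + Nb (d N x - (f x - g 0 - h 0)) := by rw [hNsub]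
      _ ≤ ε + ((2:ℝ)^β)⁻¹ * (L^0 / (1 - L)) * ψ x x := by linarith
      _ = ((2:ℝ)^β)⁻¹ / (1 - L) * ψ x x + ε := by rw [pow_zero]; ring
  -- additivity of a
  have hadd : ∀ x y : E, a (x + y) = a x + a y := by
    intro x y
    have key : Nb (a (x + y) - a x - a y) = 0 := by
      apply le_antisymm _ (hNnn _)
      have : ∀ ε : ℝ, 0 < ε → Nb (a (x + y) - a x - a y) ≤ 0 + ε := by
        intro ε hε
        obtain ⟨n0, hn0⟩ := hsmall (ψ x y) (ε/2) (hψnn x y) (by linarith)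
        obtain ⟨N1, hN1⟩ := ha (x + y) (ε/6) (by linarith)
        obtain ⟨N2, hN2⟩ := ha x (ε/6) (by linarith)
        obtain ⟨N3, hN3⟩ := ha y (ε/6) (by linarith)
        set n := max (max N1 N2) (max N3 n0) with hn
        have hnN1 : N1 ≤ n := le_trans (le_max_left _ _) (le_max_left _ _)
        have hnN2 : N2 ≤ n := le_trans (le_max_right _ _) (le_max_left _ _)
        have hnN3 : N3 ≤ n := le_trans (le_max_left _ _) (le_max_right _ _)
        have hnn0 : n0 ≤ n := le_trans (le_max_right _ _) (le_max_right _ _)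
        -- middle term bound
        have emid : d n (x + y) - d n x - d n y
            = ((2:ℝ)^n)⁻¹ • ((f ((2:ℝ)^n • x + (2:ℝ)^n • y) - g 0 - h 0)
                - (f ((2:ℝ)^n • x) - g 0 - h 0) - (f ((2:ℝ)^n • y) - g 0 - h 0)) := by
          simp only [hd]
          rw [smul_add ((2:ℝ)^n) x y]
          module
        have hmid : Nb (d n (x + y) - d n x - d n y) ≤ L^n * ψ x y := by
          rw [emid, hNpow]
          calc (((2:ℝ)^β)⁻¹)^n * Nb _
              ≤ (((2:ℝ)^β)⁻¹)^n * ψ ((2:ℝ)^n • x) ((2:ℝ)^n • y) := by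
                apply mul_le_mul_of_nonneg_left (hCD _ _) (by positivity)
            _ ≤ (((2:ℝ)^β)⁻¹)^n * (((2:ℝ)^β * L)^n * ψ x y) := by
                apply mul_le_mul_of_nonneg_left (hψiter n x y) (by positivity)
            _ = L^n * ψ x y := by
                rw [mul_pow, inv_pow]
                field_simp
        have hmid2 : Nb (d n (x + y) - d n x - d n y) ≤ ε/2 := by
          have : L^n * ψ x y ≤ L^n0 * ψ x y := by
            apply mul_le_mul_of_nonneg_right (pow_le_pow_of_le_one hL0 hL1.le hnn0) (hψnn x y)
          have h2 : ψ x y * L ^ n0 < ε/2 := hn0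
          nlinarith
        have e : a (x + y) - a x - a y
            = (a (x + y) - d n (x + y)) + (d n (x + y) - d n x - d n y)
              + (d n x - a x) + (d n y - a y) := by abel
        have h1 : Nb (a (x + y) - d n (x + y)) < ε/6 := by
          rw [hNsub]; exact hN1 n hnN1
        have h2 : Nb (d n x - a x) < ε/6 := hN2 n hnN2
        have h3 : Nb (d n y - a y) < ε/6 := hN3 n hnN3
        calc Nb (a (x + y) - a x - a y)
            ≤ Nb (a (x + y) - d n (x + y)) + Nb (d n (x + y) - d n x - d n y)
              + Nb (d n x - a x) + Nb (d n y - a y) := by rw [e]; exact tri4 _ _ _ _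
          _ ≤ 0 + ε := by linarith
      linarith [le_of_forall_pos_le_add this]
    have := (hN0 _).mp key
    have : a (x + y) - a x - a y + (a x + a y) = 0 + (a x + a y) := by rw [this]
    simpa [sub_add_cancel] using this
  -- a on powers of two
  have hapow : ∀ (b : E → F), (∀ x y : E, b (x + y) = b x + b y) →
      ∀ (n : ℕ) (x : E), b ((2:ℝ)^n • x) = (2:ℝ)^n • b x := by
    intro b hb n
    induction n with
    | zero => intro x; simp
    | succ n ih =>
      intro x
      have e : (2:ℝ)^(n+1) • x = (2:ℝ)^n • ((2:ℝ) • x) := by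
        rw [smul_smul, pow_succ]
      rw [e, ih ((2:ℝ) • x)]
      have e2 : (2:ℝ) • x = x + x := two_smul ℝ x
      rw [e2, hb x x, ← two_smul ℝ (b x), smul_smul, ← pow_succ]
  -- the three bounds for our a
  have hbf : ∀ x : E, Nb (f x - a x - g 0 - h 0)
      ≤ 2 / 2 ^ β * (1 / (1 - L)) * χ x x + 1 / 2 ^ β * (1 / (1 - L)) * ψ x x := by
    intro x
    have e : f x - a x - g 0 - h 0 = -(a x - (f x - g 0 - h 0)) := by abel
    rw [e, hNneg]
    have h1 := hdist x
    have h2 : (0:ℝ) ≤ 2 / 2 ^ β * (1 / (1 - L)) * χ x x := by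
      have := hχnn x x; positivity
    have e2 : ((2:ℝ)^β)⁻¹ / (1 - L) * ψ x x = 1 / 2 ^ β * (1 / (1 - L)) * ψ x x := by
      field_simp
    linarith [e2 ▸ h1]
  have hbg : ∀ x : E, Nb (g x - a x - g 0)
      ≤ φ x 0 + 2 / 2 ^ β * (1 / (1 - L)) * χ x x + 1 / 2 ^ β * (1 / (1 - L)) * ψ x x := by
    intro x
    have e : g x - a x - g 0 = (-(f x - g x - h 0)) + (f x - a x - g 0 - h 0) := by abel
    have h1 : Nb (f x - g x - h 0) ≤ φ x 0 := by
      have := hfgh x 0; rwa [add_zero] at this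
    calc Nb (g x - a x - g 0)
        ≤ Nb (-(f x - g x - h 0)) + Nb (f x - a x - g 0 - h 0) := by rw [e]; exact hNt _ _
      _ ≤ φ x 0 + (2 / 2 ^ β * (1 / (1 - L)) * χ x x + 1 / 2 ^ β * (1 / (1 - L)) * ψ x x) := by
          rw [hNneg]; linarith [hbf x]
      _ = φ x 0 + 2 / 2 ^ β * (1 / (1 - L)) * χ x x + 1 / 2 ^ β * (1 / (1 - L)) * ψ x x := by
          ring
  have hbh : ∀ x : E, Nb (h x - a x - h 0)
      ≤ 1 / 2 ^ β * (1 / (1 - L)) * ψ x x + φ 0 x := by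
    intro x
    have e : h x - a x - h 0 = (-(f x - g 0 - h x)) + (f x - a x - g 0 - h 0) := by abel
    have h1 : Nb (f x - g 0 - h x) ≤ φ 0 x := by
      have := hfgh 0 x; rwa [zero_add] at this
    have h2 : Nb (f x - a x - g 0 - h 0) ≤ 1 / 2 ^ β * (1 / (1 - L)) * ψ x x := by
      have e2 : f x - a x - g 0 - h 0 = -(a x - (f x - g 0 - h 0)) := by abel
      rw [e2, hNneg]
      have e3 : ((2:ℝ)^β)⁻¹ / (1 - L) * ψ x x = 1 / 2 ^ β * (1 / (1 - L)) * ψ x x := by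
        field_simp
      linarith [e3 ▸ hdist x]
    calc Nb (h x - a x - h 0)
        ≤ Nb (-(f x - g 0 - h x)) + Nb (f x - a x - g 0 - h 0) := by rw [e]; exact hNt _ _
      _ ≤ φ 0 x + 1 / 2 ^ β * (1 / (1 - L)) * ψ x x := by rw [hNneg]; linarith
      _ = 1 / 2 ^ β * (1 / (1 - L)) * ψ x x + φ 0 x := by ring
  refine ⟨a, ⟨hadd, hbf, hbg, hbh⟩, ?_⟩
  -- uniqueness
  rintro a' ⟨ha'add, ha'f, -, -⟩
  funext x
  -- define the common bound C
  set C : E → ℝ := fun z => 2 / 2 ^ β * (1 / (1 - L)) * χ z z + 1 / 2 ^ β * (1 / (1 - L)) * ψ z z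
    with hC
  have hCnn : ∀ z : E, 0 ≤ C z := by
    intro z; rw [hC]
    have := hχnn z z; have := hψnn z z
    positivity
  have hCiter : ∀ (n : ℕ) (z : E), C ((2:ℝ)^n • z) ≤ ((2:ℝ)^β * L)^n * C z := by
    intro n z
    rw [hC]
    simp only []
    have h1 := hχiter n z z
    have h2 := hψiter n z z
    have c1 : (0:ℝ) ≤ 2 / 2 ^ β * (1 / (1 - L)) := by positivity
    have c2 : (0:ℝ) ≤ 1 / 2 ^ β * (1 / (1 - L)) := by positivity
    calc 2 / 2 ^ β * (1 / (1 - L)) * χ ((2:ℝ)^n • z) ((2:ℝ)^n • z)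
          + 1 / 2 ^ β * (1 / (1 - L)) * ψ ((2:ℝ)^n • z) ((2:ℝ)^n • z)
        ≤ 2 / 2 ^ β * (1 / (1 - L)) * (((2:ℝ)^β * L)^n * χ z z)
          + 1 / 2 ^ β * (1 / (1 - L)) * (((2:ℝ)^β * L)^n * ψ z z) := by
          have := mul_le_mul_of_nonneg_left h1 c1
          have := mul_le_mul_of_nonneg_left h2 c2
          linarith
      _ = ((2:ℝ)^β * L)^n * (2 / 2 ^ β * (1 / (1 - L)) * χ z z
          + 1 / 2 ^ β * (1 / (1 - L)) * ψ z z) := by ring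
  have hdiff : ∀ z : E, Nb (a' z - a z) ≤ 2 * C z := by
    intro z
    have e : a' z - a z = (-(f z - a' z - g 0 - h 0)) + (f z - a z - g 0 - h 0) := by abel
    calc Nb (a' z - a z)
        ≤ Nb (-(f z - a' z - g 0 - h 0)) + Nb (f z - a z - g 0 - h 0) := by
          rw [e]; exact hNt _ _
      _ ≤ C z + C z := by
          rw [hNneg]
          simp only [hC]
          linarith [ha'f z, hbf z]
      _ = 2 * C z := by ring
  have key : Nb (a' x - a x) = 0 := by
    apply le_antisymm _ (hNnn _)
    have hb : ∀ ε : ℝ, 0 < ε → Nb (a' x - a x) ≤ 0 + ε := by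
      intro ε hε
      obtain ⟨n, hn⟩ := hsmall (2 * C x) ε (by linarith [hCnn x]) hε
      have e : a' x - a x = ((2:ℝ)^n)⁻¹ • (a' ((2:ℝ)^n • x) - a ((2:ℝ)^n • x)) := by
        rw [hapow a' ha'add n x, hapow a hadd n x, smul_sub, smul_smul, smul_smul]
        rw [inv_mul_cancel₀ (by positivity), one_smul, one_smul]
      calc Nb (a' x - a x)
          = (((2:ℝ)^β)⁻¹)^n * Nb (a' ((2:ℝ)^n • x) - a ((2:ℝ)^n • x)) := by rw [e, hNpow]
        _ ≤ (((2:ℝ)^β)⁻¹)^n * (2 * C ((2:ℝ)^n • x)) := by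
            apply mul_le_mul_of_nonneg_left (hdiff _) (by positivity)
        _ ≤ (((2:ℝ)^β)⁻¹)^n * (2 * (((2:ℝ)^β * L)^n * C x)) := by
            apply mul_le_mul_of_nonneg_left _ (by positivity)
            have := hCiter n x
            linarith
        _ = 2 * C x * L^n := by
            rw [mul_pow]
            field_simp
            have hc : ((2:ℝ)^β)^n * (((2:ℝ)^β)⁻¹)^n = 1 := by
              rw [← mul_pow, mul_inv_cancel₀ h2β.ne', one_pow]
            linear_combination (L^n * C x) * hc
        _ ≤ ε := le_of_lt hn
        _ = 0 + ε := by ring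
    linarith [le_of_forall_pos_le_add hb]
  have := (hN0 _).mp key
  have e2 : a' x - a x + a x = 0 + a x := by rw [this]
  simpa using e2
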